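/- Assume γ₂ > 0, γ₁ ≠ γ₂, and let Λ₂(t) denote the middle real root of φ(t,·) for large t (so Λ₂(t) > 0 and Λ₂(t) → 0 as t → ∞). Then −m²¹(t,Λ₂(t))/m²²(t,Λ₂(t)) → −∞ as t → ∞, where m²¹(t,Λ) := γ₂ − γ₁ + (Λ − γ₂d₂)·[t/tanh(t·d₁) + t/tanh(t·d₂)] and m²²(t,Λ) := −Λ·t/sinh(t·d₂). -/

import Mathlib

open Real Filter Asymptotics

/-- The coefficient `A(t)` of the dispersion cubic. -/
noncomputable def funA (d₁ d₂ γ₁ γ₂ t : ℝ) : ℝ :=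
  -(1 / t) * (γ₂ * (t * d₂ + Real.sinh (t * d₂) * Real.cosh (t * d₁) / Real.cosh (t * (d₁ + d₂)))
    + γ₁ * Real.sinh (t * d₁) * Real.cosh (t * d₂) / Real.cosh (t * (d₁ + d₂)))

/-- The coefficient `B(t)` of the dispersion cubic. -/
noncomputable def funB (d₁ d₂ g γ₁ γ₂ t : ℝ) : ℝ :=
  Real.tanh (t * (d₁ + d₂)) * ((γ₂ ^ 2 * d₂ - g) / t
    + γ₂ * (γ₁ - γ₂) * Real.sinh (t * d₁) * Real.sinh (t * d₂) /
        (t ^ 2 * Real.sinh (t * (d₁ + d₂))))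

/-- The coefficient `C(t)` of the dispersion cubic. -/
noncomputable def funC (d₁ d₂ g γ₁ γ₂ t : ℝ) : ℝ :=
  (g * Real.tanh (t * (d₁ + d₂)) / t ^ 2) *
    ((γ₁ - γ₂) * Real.sinh (t * d₁) * Real.sinh (t * d₂) / Real.sinh (t * (d₁ + d₂))
      + γ₂ * d₂ * t)

/-- The dispersion cubic `φ(t,Λ)`. -/
noncomputable def phi (d₁ d₂ g γ₁ γ₂ t Λ : ℝ) : ℝ :=
  Λ ^ 3 + funA d₁ d₂ γ₁ γ₂ t * Λ ^ 2 + funB d₁ d₂ g γ₁ γ₂ t * Λ + funC d₁ d₂ g γ₁ γ₂ t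

/-- The multiplier symbol `m¹¹(t,Λ)`. -/
noncomputable def m11 (d₂ γ₂ t Λ : ℝ) : ℝ := -2 * Λ * (γ₂ * d₂ - Λ) * t / Real.sinh (t * d₂)

/-- The multiplier symbol `m¹²(t,Λ)`. -/
noncomputable def m12 (d₂ g γ₂ t Λ : ℝ) : ℝ :=
  2 * (g + γ₂ * Λ - Λ ^ 2 * t / Real.tanh (t * d₂))

/-- The multiplier symbol `m²¹(t,Λ)`. -/
noncomputable def m21 (d₁ d₂ γ₁ γ₂ t Λ : ℝ) : ℝ :=
  γ₂ - γ₁ + (Λ - γ₂ * d₂) * (t / Real.tanh (t * d₁) + t / Real.tanh (t * d₂))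

/-- The multiplier symbol `m²²(t,Λ)`. -/
noncomputable def m22 (d₂ t Λ : ℝ) : ℝ := -Λ * t / Real.sinh (t * d₂)

lemma my_tanh_pos {x : ℝ} (hx : 0 < x) : 0 < Real.tanh x := by
  rw [Real.tanh_eq_sinh_div_cosh]
  exact div_pos (by rwa [Real.sinh_pos_iff]) (Real.cosh_pos x)

lemma my_tanh_le_one (x : ℝ) : Real.tanh x ≤ 1 := by
  rw [Real.tanh_eq_sinh_div_cosh, div_le_one (Real.cosh_pos x)]
  nlinarith [Real.sinh_lt_cosh x]

/-- along the middle root `Λ₂`, `−m²¹/m²² → −∞` as `t → ∞`. -/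
theorem ratio_m21_m22_middle_root
    (d₁ d₂ g γ₁ γ₂ : ℝ) (hd₁ : 0 < d₁) (hd₂ : 0 < d₂) (hg : 0 < g)
    (hγ₂ : 0 < γ₂) (hne : γ₁ ≠ γ₂) (Λ₁ Λ₂ Λ₃ : ℝ → ℝ)
    (hroots : ∀ᶠ t in atTop,
      Λ₃ t < Λ₂ t ∧ Λ₂ t < Λ₁ t ∧ 0 < Λ₂ t ∧ Λ₃ t < 0 ∧
      ∀ Λ : ℝ, phi d₁ d₂ g γ₁ γ₂ t Λ = (Λ - Λ₁ t) * (Λ - Λ₂ t) * (Λ - Λ₃ t))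
    (hlim2 : Tendsto Λ₂ atTop (nhds 0))
    (hlim3 : Tendsto Λ₃ atTop (nhds 0)) :
    Tendsto (fun t : ℝ => -(m21 d₁ d₂ γ₁ γ₂ t (Λ₂ t)) / m22 d₂ t (Λ₂ t)) atTop atBot := by
  -- The linear lower-bound comparison function
  set B : ℝ → ℝ := fun t => γ₂ - γ₁ - γ₂ * d₂ / 2 * t with hB
  have hBten : Tendsto B atTop atBot := by
    have h1 : Tendsto (fun t : ℝ => γ₂ * d₂ / 2 * t) atTop atTop :=
      tendsto_id.const_mul_atTop (by positivity)
    have h2 : Tendsto (fun t : ℝ => -(γ₂ * d₂ / 2 * t)) atTop atBot :=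
      tendsto_neg_atTop_atBot.comp h1
    have := tendsto_atBot_add_const_left atTop (γ₂ - γ₁) h2
    simpa [hB, sub_eq_add_neg] using this
  -- exp(t d₂) eventually dominates 3 t d₂
  have hexp : Tendsto (fun t : ℝ => Real.exp (t * d₂) / (t * d₂)) atTop atTop := by
    have := (Real.tendsto_exp_div_pow_atTop 1).comp
      (tendsto_id.atTop_mul_const hd₂ : Tendsto (fun t : ℝ => t * d₂) atTop atTop)
    simpa [Function.comp_def] using this
  have hexp' : ∀ᶠ t : ℝ in atTop, 3 / d₂ ≤ Real.exp (t * d₂) / (t * d₂) :=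
    hexp.eventually_ge_atTop _
  -- Λ₂ eventually small
  have hsmall : ∀ᶠ t in atTop, Λ₂ t ≤ min 1 (γ₂ * d₂ / 2) := by
    have : ∀ᶠ x in nhds (0 : ℝ), x ≤ min 1 (γ₂ * d₂ / 2) := by
      apply Filter.Tendsto.eventually_le_const (by positivity) tendsto_id
    exact hlim2.eventually this
  apply tendsto_atBot_mono' atTop ?_ hBten
  filter_upwards [hroots, hsmall, hexp', eventually_ge_atTop (1 : ℝ),
    eventually_ge_atTop ((γ₂ - γ₁) / (γ₂ * d₂ / 2) + 1)] with t ht hs he ht1 htB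
  obtain ⟨-, -, hpos, -, -⟩ := ht
  have ht0 : (0 : ℝ) < t := lt_of_lt_of_le one_pos ht1
  have htd2 : 0 < t * d₂ := by positivity
  have hsinhpos : 0 < Real.sinh (t * d₂) := by rwa [Real.sinh_pos_iff]
  -- sinh (t d₂) ≥ t
  have hexp3 : 3 * t ≤ Real.exp (t * d₂) := by
    have := (div_le_div_iff₀ (by positivity) htd2).mp he
    nlinarith
  have hsinht : t ≤ Real.sinh (t * d₂) := by
    rw [Real.sinh_eq]
    have : Real.exp (-(t * d₂)) ≤ 1 := Real.exp_le_one_iff.mpr (by linarith)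
    nlinarith
  -- the ratio equals m21 * (sinh (t d₂) / (t * Λ₂ t))
  have hΛne : Λ₂ t ≠ 0 := ne_of_gt hpos
  have hrw : -(m21 d₁ d₂ γ₁ γ₂ t (Λ₂ t)) / m22 d₂ t (Λ₂ t)
      = m21 d₁ d₂ γ₁ γ₂ t (Λ₂ t) * (Real.sinh (t * d₂) / (t * Λ₂ t)) := by
    rw [m22]
    field_simp
  -- the factor is ≥ 1
  have hfac : 1 ≤ Real.sinh (t * d₂) / (t * Λ₂ t) := by
    rw [le_div_iff₀ (by positivity)]
    have h1 : Λ₂ t ≤ 1 := le_trans hs (min_le_left _ _)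
    nlinarith
  -- m21 ≤ B t ≤ 0
  have htanh1 : 0 < Real.tanh (t * d₁) := my_tanh_pos (by positivity)
  have htanh2 : 0 < Real.tanh (t * d₂) := my_tanh_pos (by positivity)
  have hS : 2 * t ≤ t / Real.tanh (t * d₁) + t / Real.tanh (t * d₂) := by
    have h1 : t ≤ t / Real.tanh (t * d₁) := by
      rw [le_div_iff₀ htanh1]; nlinarith [my_tanh_le_one (t * d₁)]
    have h2 : t ≤ t / Real.tanh (t * d₂) := by
      rw [le_div_iff₀ htanh2]; nlinarith [my_tanh_le_one (t * d₂)]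
    linarith
  have hm21 : m21 d₁ d₂ γ₁ γ₂ t (Λ₂ t) ≤ B t := by
    rw [m21, hB]
    have hΛs : Λ₂ t - γ₂ * d₂ ≤ -(γ₂ * d₂ / 2) := by
      have := le_trans hs (min_le_right 1 (γ₂ * d₂ / 2)); linarith
    have hSpos : (0 : ℝ) ≤ t / Real.tanh (t * d₁) + t / Real.tanh (t * d₂) := by
      positivity
    nlinarith
  have hBle0 : B t ≤ 0 := by
    rw [hB]
    have h1 : γ₂ - γ₁ ≤ γ₂ * d₂ / 2 * t := by
      rcases le_or_gt (γ₂ - γ₁) 0 with h | h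
      · nlinarith
      · have : (γ₂ - γ₁) / (γ₂ * d₂ / 2) ≤ t := by linarith
        calc γ₂ - γ₁ = γ₂ * d₂ / 2 * ((γ₂ - γ₁) / (γ₂ * d₂ / 2)) := by
              field_simp
          _ ≤ γ₂ * d₂ / 2 * t := mul_le_mul_of_nonneg_left this (by positivity)
    linarith
  -- conclude
  rw [hrw]
  calc m21 d₁ d₂ γ₁ γ₂ t (Λ₂ t) * (Real.sinh (t * d₂) / (t * Λ₂ t))
      ≤ m21 d₁ d₂ γ₁ γ₂ t (Λ₂ t) * 1 := by
        apply mul_le_mul_of_nonpos_left hfac (le_trans hm21 hBle0)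
    _ = m21 d₁ d₂ γ₁ γ₂ t (Λ₂ t) := mul_one _
    _ ≤ B t := hm21
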